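/- Let Γ be a finite abelian group, t a fixed-point free automorphism of Γ, X = Aff(Γ, t), G_X the enveloping group of X, and D_X = [G_X, G_X]. Then the abelianization D_X/[D_X, D_X] is isomorphic as a group to Γ, and [D_X, D_X] = D_X ∩ Z(G_X), where Z(G_X) is the center of G_X. -/

import Mathlib

set_option linter.unusedSectionVars false
set_option maxHeartbeats 1000000

/-- The affine rack `Aff(Γ, t)` on an abelian group `Γ` with automorphism `t`:
`x ▷ y = (x - t x) + t y`. -/
def affRack {Γ : Type*} [AddCommGroup Γ] (t : Γ ≃+ Γ) : Rack Γ where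
  act x y := x - t x + t y
  self_distrib := by
    intro x y z
    simp only [map_add, map_sub]
    abel
  invAct x y := t.symm (y - x + t x)
  left_inv := by
    intro x y
    have h : x - t x + t y - x + t x = t y := by abel
    show t.symm (x - t x + t y - x + t x) = y
    rw [h, AddEquiv.symm_apply_apply]
  right_inv := by
    intro x y
    show x - t x + t (t.symm (y - x + t x)) = y
    rw [AddEquiv.apply_symm_apply]
    abel


open Quandles Rack
open scoped commutatorElement

namespace Stmt16Aux

variable {Γ : Type*} [AddCommGroup Γ] [Rack Γ]

/-- Short name for the canonical generators of the enveloping group. -/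
noncomputable def EE (x : Γ) : Rack.EnvelGroup Γ := Rack.toEnvelGroup Γ x

/-- `g x = e_x e_0⁻¹`, the generators of the degree-0 subgroup. -/
noncomputable def gg (x : Γ) : Rack.EnvelGroup Γ := EE x * (EE (0 : Γ))⁻¹

theorem g_zero : (gg (0 : Γ)) = 1 := by simp [gg]

variable (t : Γ ≃+ Γ)

section sec1
variable (hact : ∀ x y : Γ, Shelf.act x y = x - t x + t y)
include hact

theorem Econj (x y : Γ) : EE x * EE y * (EE x)⁻¹ = EE (x - t x + t y) := by
  have h := (Rack.toEnvelGroup Γ).map_act (x := x) (y := y)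
  rw [hact] at h
  exact h.symm

theorem Emul (x y : Γ) : EE x * EE y = EE (x - t x + t y) * EE x := by
  rw [← Econj t hact x y]; group

theorem Econj' (x y : Γ) : (EE x)⁻¹ * EE y * EE x = EE (t.symm (y - x + t x)) := by
  have h := Econj t hact x (t.symm (y - x + t x))
  rw [AddEquiv.apply_symm_apply] at h
  have h2 : x - t x + (y - x + t x) = y := by abel
  rw [h2] at h
  rw [← h]; group

theorem I1 (x y : Γ) : gg x * gg y = gg (x - t x + y) * gg (t x) := by
  have c0 : (EE (0:Γ))⁻¹ * EE y * EE (0:Γ) = EE (t.symm y) := by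
    have := Econj' t hact 0 y
    simpa using this
  have cx : EE x * EE (t.symm y) * (EE x)⁻¹ = EE (x - t x + y) := by
    have := Econj t hact x (t.symm y)
    rwa [AddEquiv.apply_symm_apply] at this
  have ctx : EE (0:Γ) * EE x * (EE (0:Γ))⁻¹ = EE (t x) := by
    have := Econj t hact 0 x
    simpa using this
  calc gg x * gg y
      = EE x * ((EE (0:Γ))⁻¹ * EE y * EE (0:Γ)) * (EE (0:Γ))⁻¹ * (EE (0:Γ))⁻¹ := by
        simp only [gg]; group
    _ = EE x * EE (t.symm y) * (EE (0:Γ))⁻¹ * (EE (0:Γ))⁻¹ := by rw [c0]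
    _ = (EE x * EE (t.symm y) * (EE x)⁻¹) * ((EE (0:Γ))⁻¹ * (EE (0:Γ) * EE x * (EE (0:Γ))⁻¹) * (EE (0:Γ))⁻¹) := by
        group
    _ = EE (x - t x + y) * ((EE (0:Γ))⁻¹ * EE (t x) * (EE (0:Γ))⁻¹) := by rw [cx, ctx]
    _ = gg (x - t x + y) * gg (t x) := by
        simp only [gg]; group


variable (sinv : Γ ≃+ Γ)

/-- `h a = g (s⁻¹ a)` where `s = 1 - t`. -/
noncomputable def hh (a : Γ) : Rack.EnvelGroup Γ := gg (sinv a)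

/-- The central elements `z a b = (h a h b)⁻¹ h (a+b)`. -/
noncomputable def zz (a b : Γ) : Rack.EnvelGroup Γ :=
  (hh sinv a * hh sinv b)⁻¹ * hh sinv (a + b)

variable (hs1 : ∀ a : Γ, sinv a - t (sinv a) = a) (hs2 : ∀ x : Γ, sinv (x - t x) = x)

theorem conjE0_g (y : Γ) : EE (0 : Γ) * gg y * (EE (0 : Γ))⁻¹ = gg (t y) := by
  have c : EE (0:Γ) * EE y * (EE (0:Γ))⁻¹ = EE (t y) := by
    have := Econj t hact 0 y; simpa using this
  have h : EE (0:Γ) * gg y * (EE (0:Γ))⁻¹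
      = (EE (0:Γ) * EE y * (EE (0:Γ))⁻¹) * (EE (0:Γ))⁻¹ := by
    simp only [gg]; group
  rw [h, c]; rfl

section sec2
include hact hs1 hs2

theorem hts (a : Γ) : sinv (t a) = t (sinv a) := by
  have h1 : t a = t (sinv a) - t (t (sinv a)) := by
    rw [← map_sub, hs1]
  rw [h1, hs2]

theorem Istar (a v : Γ) : hh sinv a * gg v = gg (a + v) * hh sinv (t a) := by
  have h := I1 t hact (sinv a) v
  rw [hs1] at h
  simp only [hh]
  rw [hts t hact sinv hs1 hs2]
  exact h

theorem Istar' (a v : Γ) : gg (a + v) = hh sinv a * gg v * (hh sinv (t a))⁻¹ := by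
  rw [Istar t hact sinv hs1 hs2 a v]; group

theorem EqE (a b v : Γ) :
    gg (a + b + v) = hh sinv a * hh sinv b * gg v * (hh sinv (t b))⁻¹ * (hh sinv (t a))⁻¹ := by
  have h1 := Istar' t hact sinv hs1 hs2 a (b + v)
  have h2 := Istar' t hact sinv hs1 hs2 b v
  rw [← add_assoc] at h1
  rw [h1, h2]; group

theorem hh_split (a b : Γ) :
    hh sinv (a + b) = gg (a + b) * hh sinv (t a + t b) := by
  have h := Istar t hact sinv hs1 hs2 (a + b) 0
  rw [add_zero, g_zero, mul_one, map_add] at h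
  exact h

theorem z_shift (a b : Γ) : zz sinv a b = zz sinv (t a) (t b) := by
  have A := hh_split t hact sinv hs1 hs2 a b
  have B := EqE t hact sinv hs1 hs2 a b 0
  rw [add_zero, g_zero] at B
  simp only [zz]
  rw [A, B]
  group

theorem z_comm_g (a b v : Γ) : zz sinv a b * gg v = gg v * zz sinv a b := by
  have h1 := EqE t hact sinv hs1 hs2 a b v
  have h2 : gg (a + b + v) = hh sinv (a + b) * gg v * (hh sinv (t a + t b))⁻¹ := by
    have := Istar' t hact sinv hs1 hs2 (a + b) v
    rwa [map_add] at this
  have eq : hh sinv (a + b) * gg v * (hh sinv (t a + t b))⁻¹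
      = hh sinv a * hh sinv b * gg v * (hh sinv (t b))⁻¹ * (hh sinv (t a))⁻¹ :=
    h2.symm.trans h1
  have eq3 : zz sinv a b * gg v
      = (hh sinv a * hh sinv b)⁻¹ *
        (hh sinv (a + b) * gg v * (hh sinv (t a + t b))⁻¹) * hh sinv (t a + t b) := by
    simp only [zz]; group
  rw [eq] at eq3
  rw [eq3, z_shift t hact sinv hs1 hs2 a b]
  simp only [zz]
  group

theorem conjE0_hh (c : Γ) : EE (0 : Γ) * hh sinv c * (EE (0 : Γ))⁻¹ = hh sinv (t c) := by
  simp only [hh]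
  rw [conjE0_g t hact, hts t hact sinv hs1 hs2]

theorem z_comm_E0 (a b : Γ) : zz sinv a b * EE (0 : Γ) = EE (0 : Γ) * zz sinv a b := by
  have key : EE (0:Γ) * zz sinv a b * (EE (0:Γ))⁻¹ = zz sinv (t a) (t b) := by
    have ha := conjE0_hh t hact sinv hs1 hs2 a
    have hb := conjE0_hh t hact sinv hs1 hs2 b
    have hab := conjE0_hh t hact sinv hs1 hs2 (a + b)
    rw [map_add] at hab
    simp only [zz]
    rw [show EE (0:Γ) * ((hh sinv a * hh sinv b)⁻¹ * hh sinv (a + b)) * (EE (0:Γ))⁻¹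
        = (EE (0:Γ) * hh sinv b * (EE (0:Γ))⁻¹)⁻¹ * (EE (0:Γ) * hh sinv a * (EE (0:Γ))⁻¹)⁻¹ *
          (EE (0:Γ) * hh sinv (a + b) * (EE (0:Γ))⁻¹) from by group]
    rw [ha, hb, hab]
    group
  rw [← z_shift t hact sinv hs1 hs2 a b] at key
  exact (mul_inv_eq_iff_eq_mul.mp key).symm

end sec2

omit hact in
theorem Etop : Subgroup.closure (Set.range (EE : Γ → Rack.EnvelGroup Γ)) = ⊤ := by
  rw [eq_top_iff]
  rintro x -
  induction x using Quotient.inductionOn with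
  | h p =>
    induction p with
    | unit => exact one_mem _
    | incl y => exact Subgroup.subset_closure ⟨y, rfl⟩
    | mul a b ha hb =>
      exact (show (⟦a.mul b⟧ : Rack.EnvelGroup Γ) = @Mul.mul (Rack.EnvelGroup Γ) _ ⟦a⟧ ⟦b⟧ from rfl) ▸ mul_mem ha hb
    | inv a ha =>
      exact (show (⟦a.inv⟧ : Rack.EnvelGroup Γ) = @Inv.inv (Rack.EnvelGroup Γ) _ ⟦a⟧ from rfl) ▸ inv_mem ha

omit hact in
theorem E_eq_g_mul (c : Γ) : EE c = gg c * EE (0 : Γ) := by simp [gg]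

omit hact in
theorem EdivE (a b : Γ) : EE a * (EE b)⁻¹ = gg a * (gg b)⁻¹ := by simp only [gg]; group

/-- The subgroup generated by the `g x`. -/
noncomputable def MM (Γ : Type*) [AddCommGroup Γ] [Rack Γ] : Subgroup (Rack.EnvelGroup Γ) :=
  Subgroup.closure (Set.range (gg : Γ → Rack.EnvelGroup Γ))

omit hact in
theorem g_mem (x : Γ) : gg x ∈ MM Γ := Subgroup.subset_closure ⟨x, rfl⟩

section sec3
include hact hs1 hs2

theorem commute_z (a b : Γ) (w : Rack.EnvelGroup Γ) : Commute w (zz sinv a b) := by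
  have hw : w ∈ Subgroup.closure (Set.range (EE : Γ → Rack.EnvelGroup Γ)) := by
    rw [Etop]; trivial
  induction hw using Subgroup.closure_induction with
  | mem x hx =>
    obtain ⟨c, rfl⟩ := hx
    have c1 : Commute (zz sinv a b) (gg c) := z_comm_g t hact sinv hs1 hs2 a b c
    have c2 : Commute (zz sinv a b) (EE (0 : Γ)) := z_comm_E0 t hact sinv hs1 hs2 a b
    rw [E_eq_g_mul c]
    exact (c1.mul_right c2).symm
  | one => exact Commute.one_left _
  | mul x y hx hy cx cy => exact cx.mul_left cy
  | inv x hx cx => exact cx.inv_left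

theorem z_central (a b : Γ) : zz sinv a b ∈ Subgroup.center (Rack.EnvelGroup Γ) := by
  rw [Subgroup.mem_center_iff]
  exact fun w => commute_z t hact sinv hs1 hs2 a b w

theorem comm_hh_central (a b : Γ) :
    ⁅hh sinv a, hh sinv b⁆ ∈ Subgroup.center (Rack.EnvelGroup Γ) := by
  have e1 : hh sinv a * hh sinv b = hh sinv (a + b) * (zz sinv a b)⁻¹ := by
    simp only [zz]; group
  have e2 : hh sinv b * hh sinv a = hh sinv (a + b) * (zz sinv b a)⁻¹ := by
    simp only [zz]; rw [add_comm b a]; group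
  have e4 : ⁅hh sinv a, hh sinv b⁆ = (hh sinv a * hh sinv b) * (hh sinv b * hh sinv a)⁻¹ := by
    rw [commutatorElement_def]; group
  rw [e1, e2] at e4
  have hzc : (zz sinv a b)⁻¹ * zz sinv b a ∈ Subgroup.center (Rack.EnvelGroup Γ) :=
    mul_mem (inv_mem (z_central t hact sinv hs1 hs2 a b)) (z_central t hact sinv hs1 hs2 b a)
  have hcomm := (Subgroup.mem_center_iff.mp hzc (hh sinv (a + b))).symm
  have e5 : ⁅hh sinv a, hh sinv b⁆ = (zz sinv a b)⁻¹ * zz sinv b a := by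
    rw [e4]
    calc hh sinv (a + b) * (zz sinv a b)⁻¹ * (hh sinv (a + b) * (zz sinv b a)⁻¹)⁻¹
        = hh sinv (a + b) * ((zz sinv a b)⁻¹ * zz sinv b a) * (hh sinv (a + b))⁻¹ := by group
      _ = ((zz sinv a b)⁻¹ * zz sinv b a) * hh sinv (a + b) * (hh sinv (a + b))⁻¹ := by
          rw [hcomm]
      _ = (zz sinv a b)⁻¹ * zz sinv b a := by group
  rw [e5]
  exact hzc

theorem gg_eq_hh (x : Γ) : gg x = hh sinv (x - t x) := by
  simp only [hh]; rw [hs2]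

theorem comm_gg_central (x y : Γ) :
    ⁅gg x, gg y⁆ ∈ Subgroup.center (Rack.EnvelGroup Γ) := by
  rw [gg_eq_hh t hact sinv hs1 hs2 x, gg_eq_hh t hact sinv hs1 hs2 y]
  exact comm_hh_central t hact sinv hs1 hs2 _ _

end sec3

section sec4
include hact

theorem I3 (c y : Γ) :
    EE c * gg y * (EE c)⁻¹ = gg (c - t c + t y) * (gg (c - t c))⁻¹ := by
  have h1 : EE c * gg y * (EE c)⁻¹
      = (EE c * EE y * (EE c)⁻¹) * (EE c * EE (0:Γ) * (EE c)⁻¹)⁻¹ := by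
    simp only [gg]; group
  rw [h1, Econj t hact, Econj t hact]
  rw [map_zero, add_zero]
  exact EdivE _ _

theorem I3' (c y : Γ) :
    (EE c)⁻¹ * gg y * EE c = gg (t.symm (y - c + t c)) * (gg (t.symm (0 - c + t c)))⁻¹ := by
  have h1 : (EE c)⁻¹ * gg y * EE c
      = ((EE c)⁻¹ * EE y * EE c) * ((EE c)⁻¹ * EE (0:Γ) * EE c)⁻¹ := by
    simp only [gg]; group
  rw [h1, Econj' t hact, Econj' t hact]
  exact EdivE _ _

theorem conj_mem_M (c : Γ) : ∀ n ∈ MM Γ, EE c * n * (EE c)⁻¹ ∈ MM Γ := by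
  intro n hn
  induction hn using Subgroup.closure_induction with
  | mem x hx =>
    obtain ⟨y, rfl⟩ := hx
    rw [I3 t hact]
    exact mul_mem (g_mem _) (inv_mem (g_mem _))
  | one => simpa using one_mem (MM Γ)
  | mul x y hx hy cx cy =>
    rw [show EE c * (x * y) * (EE c)⁻¹ = (EE c * x * (EE c)⁻¹) * (EE c * y * (EE c)⁻¹) from by
      group]
    exact mul_mem cx cy
  | inv x hx cx =>
    rw [show EE c * x⁻¹ * (EE c)⁻¹ = (EE c * x * (EE c)⁻¹)⁻¹ from by group]
    exact inv_mem cx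

theorem conj_mem_M' (c : Γ) : ∀ n ∈ MM Γ, (EE c)⁻¹ * n * EE c ∈ MM Γ := by
  intro n hn
  induction hn using Subgroup.closure_induction with
  | mem x hx =>
    obtain ⟨y, rfl⟩ := hx
    rw [I3' t hact]
    exact mul_mem (g_mem _) (inv_mem (g_mem _))
  | one => simpa using one_mem (MM Γ)
  | mul x y hx hy cx cy =>
    rw [show (EE c)⁻¹ * (x * y) * EE c = ((EE c)⁻¹ * x * EE c) * ((EE c)⁻¹ * y * EE c) from by
      group]
    exact mul_mem cx cy
  | inv x hx cx =>
    rw [show (EE c)⁻¹ * x⁻¹ * EE c = ((EE c)⁻¹ * x * EE c)⁻¹ from by group]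
    exact inv_mem cx

theorem M_normal : (MM Γ).Normal := by
  rw [← Subgroup.normalizer_eq_top_iff]
  rw [eq_top_iff, ← Etop, Subgroup.closure_le]
  rintro _ ⟨c, rfl⟩
  rw [SetLike.mem_coe, Subgroup.mem_normalizer_iff]
  intro h
  constructor
  · intro hh
    exact conj_mem_M t hact c h hh
  · intro hh
    have := conj_mem_M' t hact c _ hh
    rw [show (EE c)⁻¹ * (EE c * h * (EE c)⁻¹) * EE c = h from by group] at this
    exact this

end sec4

section sec5
include hact hs1 hs2

theorem gg_is_commutator (x : Γ) : ⁅EE (sinv x), EE (0 : Γ)⁆ = gg x := by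
  have h := Econj t hact (sinv x) 0
  rw [map_zero, add_zero] at h
  rw [commutatorElement_def]
  rw [show EE (sinv x) * EE (0:Γ) * (EE (sinv x))⁻¹ * (EE (0:Γ))⁻¹
      = (EE (sinv x) * EE (0:Γ) * (EE (sinv x))⁻¹) * (EE (0:Γ))⁻¹ from by group, h]
  rw [hs1]
  rfl

theorem commutator_eq_M : commutator (Rack.EnvelGroup Γ) = MM Γ := by
  haveI : (MM Γ).Normal := M_normal t hact
  apply le_antisymm
  · rw [commutator_def, Subgroup.commutator_le]
    intro a _ b _
    set π := QuotientGroup.mk' (MM Γ) with hπ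
    have hzp : ∀ w : Rack.EnvelGroup Γ, π w ∈ Subgroup.zpowers (π (EE (0 : Γ))) := by
      intro w
      have hw : w ∈ Subgroup.closure (Set.range (EE : Γ → Rack.EnvelGroup Γ)) := by
        rw [Etop]; trivial
      induction hw using Subgroup.closure_induction with
      | mem x hx =>
        obtain ⟨c, rfl⟩ := hx
        rw [E_eq_g_mul c, map_mul]
        have : π (gg c) = 1 := (QuotientGroup.eq_one_iff _).mpr (g_mem c)
        rw [this, one_mul]
        exact Subgroup.mem_zpowers _
      | one => rw [map_one]; exact one_mem _
      | mul x y hx hy cx cy => rw [map_mul]; exact mul_mem cx cy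
      | inv x hx cx => rw [map_inv]; exact inv_mem cx
    have hcomm : Commute (π a) (π b) := by
      obtain ⟨m, hm⟩ := hzp a
      obtain ⟨n, hn⟩ := hzp b
      rw [← hm, ← hn]
      exact (Commute.refl (π (EE (0:Γ)))).zpow_zpow m n
    have : π ⁅a, b⁆ = 1 := by
      rw [map_commutatorElement]
      exact commutatorElement_eq_one_iff_commute.mpr hcomm
    have := (QuotientGroup.eq_one_iff _).mp this
    exact this
  · rw [MM, Subgroup.closure_le]
    rintro _ ⟨x, rfl⟩
    rw [SetLike.mem_coe, ← gg_is_commutator t hact sinv hs1 hs2 x, commutator_def]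
    exact Subgroup.commutator_mem_commutator (Subgroup.mem_top _) (Subgroup.mem_top _)

end sec5

omit hact in
/-- A generic fact: if all elements of `S` pairwise commute, then all elements of the
subgroup generated by `S` pairwise commute. -/
theorem commute_closure_of_commute {G : Type*} [Group G] {S : Set G}
    (hS : ∀ a ∈ S, ∀ b ∈ S, Commute a b) :
    ∀ a ∈ Subgroup.closure S, ∀ b ∈ Subgroup.closure S, Commute a b := by
  have step1 : ∀ s ∈ S, ∀ b ∈ Subgroup.closure S, Commute s b := by
    intro s hs b hb
    induction hb using Subgroup.closure_induction with
    | mem x hx => exact hS s hs x hx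
    | one => exact Commute.one_right _
    | mul x y hx hy cx cy => exact cx.mul_right cy
    | inv x hx cx => exact cx.inv_right
  intro a ha b hb
  induction ha using Subgroup.closure_induction with
  | mem x hx => exact step1 x hx b hb
  | one => exact Commute.one_left _
  | mul x y hx hy cx cy => exact cx.mul_left cy
  | inv x hx cx => exact cx.inv_left

/-- The twisting homomorphism for the semidirect product `Γ ⋊ ℤ`. -/
noncomputable def phiSD : Multiplicative ℤ →* MulAut (Multiplicative Γ) :=
  zpowersHom _ (AddEquiv.toMultiplicative t)

omit hact in
theorem phiSD_one (v : Multiplicative Γ) :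
    phiSD t (Multiplicative.ofAdd 1) v = Multiplicative.ofAdd (t v.toAdd) := by
  rw [phiSD, zpowersHom_apply]
  norm_num

omit hact in
theorem phiSD_comb (m n : Multiplicative ℤ) (v : Multiplicative Γ) :
    phiSD t m (phiSD t n v) = phiSD t (m * n) v := by
  rw [map_mul]
  rfl

/-- The rack morphism from the affine rack to `Conj (Γ ⋊ ℤ)`. -/
noncomputable def fSD (hact : ∀ x y : Γ, Shelf.act x y = x - t x + t y) :
    Γ →◃ Quandle.Conj (Multiplicative Γ ⋊[phiSD t] Multiplicative ℤ) where
  toFun x := ⟨Multiplicative.ofAdd x, Multiplicative.ofAdd 1⟩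
  map_act' := by
    intro x y
    rw [Quandle.conj_act_eq_conj]
    ext
    · show Multiplicative.ofAdd (Shelf.act x y) = _
      rw [hact]
      simp only [SemidirectProduct.mul_left, SemidirectProduct.inv_left,
        SemidirectProduct.mul_right, SemidirectProduct.inv_right]
      rw [phiSD_comb]
      rw [show Multiplicative.ofAdd (1:ℤ) * Multiplicative.ofAdd (1:ℤ) *
          (Multiplicative.ofAdd (1:ℤ))⁻¹ = Multiplicative.ofAdd (1:ℤ) from by group]
      rw [show ((Multiplicative.ofAdd x)⁻¹ : Multiplicative Γ)
          = Multiplicative.ofAdd (-x) from rfl]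
      rw [phiSD_one, phiSD_one]
      show Multiplicative.ofAdd (x - t x + t y)
          = Multiplicative.ofAdd x * Multiplicative.ofAdd (t ((Multiplicative.ofAdd y).toAdd))
            * Multiplicative.ofAdd (t ((Multiplicative.ofAdd (-x)).toAdd))
      rw [show (Multiplicative.ofAdd y).toAdd = y from rfl,
        show (Multiplicative.ofAdd (-x)).toAdd = -x from rfl]
      rw [← ofAdd_add, ← ofAdd_add, map_neg]
      congr 1
      abel
    · show Multiplicative.ofAdd (1:ℤ) = _
      simp only [SemidirectProduct.mul_right, SemidirectProduct.inv_right]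
      group
      rfl

/-- The homomorphism `G_X →* Γ ⋊ ℤ`. -/
noncomputable def psiSD (hact : ∀ x y : Γ, Shelf.act x y = x - t x + t y) :
    Rack.EnvelGroup Γ →* Multiplicative Γ ⋊[phiSD t] Multiplicative ℤ :=
  Rack.toEnvelGroup.map (fSD t hact)

section sec6
include hact

theorem psiSD_E (x : Γ) :
    psiSD t hact (EE x) = ⟨Multiplicative.ofAdd x, Multiplicative.ofAdd 1⟩ := rfl

theorem psiSD_g (x : Γ) :
    psiSD t hact (gg x) = SemidirectProduct.inl (Multiplicative.ofAdd x) := by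
  rw [show gg x = EE x * (EE (0:Γ))⁻¹ from rfl, map_mul, map_inv, psiSD_E t hact, psiSD_E t hact]
  ext
  · simp
  · simp

theorem M_right : ∀ n ∈ MM Γ, (psiSD t hact n).right = 1 := by
  intro n hn
  induction hn using Subgroup.closure_induction with
  | mem x hx =>
    obtain ⟨y, rfl⟩ := hx
    rw [psiSD_g t hact]
    simp
  | one => simp
  | mul x y hx hy cx cy => rw [map_mul, SemidirectProduct.mul_right, cx, cy, one_mul]
  | inv x hx cx => rw [map_inv, SemidirectProduct.inv_right, cx]; rfl

end sec6

/-- The homomorphism `M →* Γ` given by the `Γ`-component of `psiSD`. -/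
noncomputable def PsiM (hact : ∀ x y : Γ, Shelf.act x y = x - t x + t y) :
    ↥(MM Γ) →* Multiplicative Γ :=
  MonoidHom.mk' (fun d => (psiSD t hact d.1).left) (by
    intro d e
    show (psiSD t hact ((d : Rack.EnvelGroup Γ) * (e : Rack.EnvelGroup Γ))).left
        = (psiSD t hact d.1).left * (psiSD t hact e.1).left
    rw [map_mul, SemidirectProduct.mul_left, M_right t hact _ d.2, map_one,
      MulAut.one_apply])


/-- Images of the generators `g x` in the abelianization of `M`. -/
noncomputable def aG (x : Γ) : Abelianization ↥(MM Γ) :=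
  Abelianization.of ⟨gg x, g_mem x⟩

omit hact in
theorem aG_zero : aG (0 : Γ) = 1 := by
  have h : (⟨gg (0:Γ), g_mem 0⟩ : ↥(MM Γ)) = 1 := Subtype.ext g_zero
  rw [aG, h, map_one]

section sec7
include hact hs1 hs2

theorem aG_rel (u y : Γ) : aG (sinv u) * aG y = aG (u + y) * aG (t (sinv u)) := by
  have keyG : gg (sinv u) * gg y = gg (u + y) * gg (t (sinv u)) := by
    have h := Istar t hact sinv hs1 hs2 u y
    simp only [hh] at h
    rwa [hts t hact sinv hs1 hs2] at h
  rw [aG, aG, aG, aG, ← map_mul, ← map_mul]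
  congr 1
  exact Subtype.ext keyG

theorem aG_add (u y : Γ) : aG (u + y) = aG u * aG y := by
  have h := aG_rel t hact sinv hs1 hs2 u y
  have h0 := aG_rel t hact sinv hs1 hs2 u 0
  rw [add_zero, aG_zero, mul_one] at h0
  rw [h0] at h
  have h2 : aG (u + y) * aG (t (sinv u)) = (aG u * aG y) * aG (t (sinv u)) := by
    rw [← h, mul_right_comm]
  exact mul_right_cancel h2

end sec7

/-- The induced homomorphism from the abelianization of `M` to `Γ`. -/
noncomputable def phi1 (hact : ∀ x y : Γ, Shelf.act x y = x - t x + t y) :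
    Abelianization ↥(MM Γ) →* Multiplicative Γ :=
  Abelianization.lift (PsiM t hact)

theorem phi1_aG (hact : ∀ x y : Γ, Shelf.act x y = x - t x + t y) (x : Γ) :
    phi1 t hact (aG x) = Multiplicative.ofAdd x := by
  rw [aG, phi1, Abelianization.lift_apply_of]
  show (psiSD t hact (gg x)).left = Multiplicative.ofAdd x
  rw [psiSD_g t hact]
  rfl

/-- The homomorphism `Γ →* Abelianization M`. -/
noncomputable def phi2 (hact : ∀ x y : Γ, Shelf.act x y = x - t x + t y)
    (hs1 : ∀ a : Γ, sinv a - t (sinv a) = a) (hs2 : ∀ x : Γ, sinv (x - t x) = x) :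
    Multiplicative Γ →* Abelianization ↥(MM Γ) :=
  MonoidHom.mk' (fun u => aG u.toAdd) (by
    intro a b
    show aG ((a * b : Multiplicative Γ).toAdd) = aG a.toAdd * aG b.toAdd
    rw [show (a * b : Multiplicative Γ).toAdd = a.toAdd + b.toAdd from rfl]
    exact aG_add t hact sinv hs1 hs2 _ _)

section sec8
include hact hs1 hs2

theorem phi1_phi2 (u : Multiplicative Γ) :
    phi1 t hact (phi2 t sinv hact hs1 hs2 u) = u := by
  show phi1 t hact (aG u.toAdd) = u
  rw [phi1_aG t hact]
  rfl

theorem phi2_surj : Function.Surjective (phi2 t sinv hact hs1 hs2) := by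
  intro α
  obtain ⟨d, rfl⟩ : ∃ d, Abelianization.of d = α :=
    QuotientGroup.induction_on α fun z => ⟨z, rfl⟩
  obtain ⟨w, hw⟩ := d
  have hw' : w ∈ Subgroup.closure (Set.range (gg : Γ → Rack.EnvelGroup Γ)) := hw
  show Abelianization.of (⟨w, hw⟩ : ↥(MM Γ)) ∈ Set.range (phi2 t sinv hact hs1 hs2)
  have key : ∀ (v : Rack.EnvelGroup Γ) (hv : v ∈ MM Γ),
      Abelianization.of (⟨v, hv⟩ : ↥(MM Γ)) ∈ (phi2 t sinv hact hs1 hs2).range := by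
    intro v hv
    induction hv using Subgroup.closure_induction with
    | mem x hx =>
      obtain ⟨y, rfl⟩ := hx
      refine ⟨Multiplicative.ofAdd y, ?_⟩
      show aG ((Multiplicative.ofAdd y).toAdd) = _
      rw [show (Multiplicative.ofAdd y).toAdd = y from rfl, aG]
    | one =>
      rw [show (⟨(1 : Rack.EnvelGroup Γ), one_mem _⟩ : ↥(MM Γ)) = 1 from rfl, map_one]
      exact one_mem _
    | mul x y hx hy cx cy =>
      rw [show (⟨x * y, mul_mem hx hy⟩ : ↥(MM Γ)) = ⟨x, hx⟩ * ⟨y, hy⟩ from rfl, map_mul]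
      exact mul_mem cx cy
    | inv x hx cx =>
      rw [show (⟨x⁻¹, inv_mem hx⟩ : ↥(MM Γ)) = (⟨x, hx⟩ : ↥(MM Γ))⁻¹ from rfl, map_inv]
      exact inv_mem cx
  exact key w hw

theorem phi1_inj : Function.Injective (phi1 t hact) := by
  intro α β h
  obtain ⟨u, rfl⟩ := phi2_surj t hact sinv hs1 hs2 α
  obtain ⟨v, rfl⟩ := phi2_surj t hact sinv hs1 hs2 β
  rw [phi1_phi2 t hact sinv hs1 hs2, phi1_phi2 t hact sinv hs1 hs2] at h
  rw [h]

theorem M_comm_central : ∀ a ∈ MM Γ, ∀ b ∈ MM Γ,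
    ⁅a, b⁆ ∈ Subgroup.center (Rack.EnvelGroup Γ) := by
  intro a ha b hb
  set Z := Subgroup.center (Rack.EnvelGroup Γ) with hZ
  let π := QuotientGroup.mk' Z
  have hkill : ∀ x y : Γ, π ⁅gg x, gg y⁆ = 1 := by
    intro x y
    rw [← MonoidHom.mem_ker, QuotientGroup.ker_mk']
    exact comm_gg_central t hact sinv hs1 hs2 x y
  have hcommS : ∀ u ∈ (π '' Set.range (gg : Γ → Rack.EnvelGroup Γ)),
      ∀ v ∈ (π '' Set.range (gg : Γ → Rack.EnvelGroup Γ)), Commute u v := by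
    rintro _ ⟨_, ⟨x, rfl⟩, rfl⟩ _ ⟨_, ⟨y, rfl⟩, rfl⟩
    apply commutatorElement_eq_one_iff_commute.mp
    rw [← map_commutatorElement]
    exact hkill x y
  have hmem : ∀ c ∈ MM Γ, π c ∈ Subgroup.closure (π '' Set.range gg) := by
    intro c hc
    rw [← MonoidHom.map_closure]
    exact ⟨c, hc, rfl⟩
  have hC : Commute (π a) (π b) :=
    commute_closure_of_commute hcommS _ (hmem a ha) _ (hmem b hb)
  have : π ⁅a, b⁆ = 1 := by
    rw [map_commutatorElement]
    exact commutatorElement_eq_one_iff_commute.mpr hC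
  rw [← MonoidHom.mem_ker, QuotientGroup.ker_mk'] at this
  exact this

theorem part2 (hfpf : ∀ x : Γ, t x = x → x = 0) :
    ⁅MM Γ, MM Γ⁆ = MM Γ ⊓ Subgroup.center (Rack.EnvelGroup Γ) := by
  haveI : (MM Γ).Normal := M_normal t hact
  apply le_antisymm
  · apply le_inf
    · exact Subgroup.commutator_le_left _ _
    · rw [Subgroup.commutator_le]
      intro a ha b hb
      exact M_comm_central t hact sinv hs1 hs2 a ha b hb
  · rintro n ⟨hnM, hnc⟩
    have hr := M_right t hact n hnM
    have hcomm : EE (0:Γ) * n = n * EE (0:Γ) := Subgroup.mem_center_iff.mp hnc (EE (0:Γ))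
    have hψ := congrArg (psiSD t hact) hcomm
    rw [map_mul, map_mul, psiSD_E t hact] at hψ
    have hleft := congrArg SemidirectProduct.left hψ
    simp only [SemidirectProduct.mul_left, hr, map_one, ofAdd_zero, one_mul, mul_one,
      MulAut.one_apply] at hleft
    -- hleft : phiSD t (ofAdd 1) (psiSD n).left = (psiSD n).left
    set L := (psiSD t hact n).left with hL
    have hL1 : L = 1 := by
      have h1 : Multiplicative.ofAdd (t L.toAdd) = L := by
        rw [← phiSD_one t]
        exact hleft
      have h2 : t L.toAdd = L.toAdd := congrArg Multiplicative.toAdd h1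
      have h3 : L.toAdd = 0 := hfpf _ h2
      have : Multiplicative.ofAdd (L.toAdd) = Multiplicative.ofAdd 0 := by rw [h3]
      simpa using this
    have h1 : phi1 t hact (Abelianization.of ⟨n, hnM⟩) = 1 := by
      rw [phi1, Abelianization.lift_apply_of]
      exact hL1
    have h2 : Abelianization.of (⟨n, hnM⟩ : ↥(MM Γ)) = 1 := by
      apply phi1_inj t hact sinv hs1 hs2
      rw [h1, map_one]
    have h3 : (⟨n, hnM⟩ : ↥(MM Γ)) ∈ commutator ↥(MM Γ) :=
      (QuotientGroup.eq_one_iff _).mp h2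
    have h4 : n ∈ Subgroup.map (MM Γ).subtype (commutator ↥(MM Γ)) := ⟨_, h3, rfl⟩
    have h5 : Subgroup.map (MM Γ).subtype (⊤ : Subgroup ↥(MM Γ)) = MM Γ := by
      rw [← MonoidHom.range_eq_map, Subgroup.range_subtype]
    rwa [commutator_def, Subgroup.map_commutator, h5] at h4

end sec8
end sec1
end Stmt16Aux


/-- Let `Γ` be a finite abelian group, `t` a fixed-point free automorphism
of `Γ`, `X = Aff(Γ, t)`, `G_X` the enveloping group of `X` and `D_X = [G_X, G_X]`. Then the
abelianization `D_X/[D_X, D_X]` is isomorphic to `Γ`, and `[D_X, D_X] = D_X ∩ Z(G_X)`. -/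
theorem commutator_envelGroup_affRack_abelianization
    {Γ : Type*} [AddCommGroup Γ] [Finite Γ] (t : Γ ≃+ Γ)
    (hfpf : ∀ x : Γ, t x = x → x = 0) :
    Nonempty (Abelianization (commutator (@Rack.EnvelGroup Γ (affRack t)))
        ≃* Multiplicative Γ) ∧
    ⁅commutator (@Rack.EnvelGroup Γ (affRack t)),
        commutator (@Rack.EnvelGroup Γ (affRack t))⁆ =
      commutator (@Rack.EnvelGroup Γ (affRack t)) ⊓
        Subgroup.center (@Rack.EnvelGroup Γ (affRack t)) := by
  have hact : ∀ x y : Γ, @Shelf.act Γ (@Rack.toShelf Γ (affRack t)) x y = x - t x + t y :=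
    fun _ _ => rfl
  let s : Γ →+ Γ := AddMonoidHom.id Γ - t.toAddMonoidHom
  have hsapp : ∀ x : Γ, s x = x - t x := fun x => by
    show (AddMonoidHom.id Γ - t.toAddMonoidHom) x = x - t x
    simp
  have hinj : Function.Injective s := by
    rw [injective_iff_map_eq_zero]
    intro a ha
    rw [hsapp] at ha
    exact hfpf a (sub_eq_zero.mp ha).symm
  have hbij : Function.Bijective s := Finite.injective_iff_bijective.mp hinj
  let sE : Γ ≃+ Γ := AddEquiv.ofBijective s hbij
  let sinv : Γ ≃+ Γ := sE.symm
  have hsE : ∀ x : Γ, sE x = x - t x := fun x => hsapp x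
  have hs1 : ∀ a : Γ, sinv a - t (sinv a) = a := by
    intro a
    have h := sE.apply_symm_apply a
    rw [hsE] at h
    exact h
  have hs2 : ∀ x : Γ, sinv (x - t x) = x := by
    intro x
    rw [← hsE x]
    exact sE.symm_apply_apply x
  have hcm := @Stmt16Aux.commutator_eq_M Γ _ (affRack t) t hact sinv hs1 hs2
  constructor
  · rw [hcm]
    exact ⟨MulEquiv.ofBijective (@Stmt16Aux.phi1 Γ _ (affRack t) t hact)
      ⟨@Stmt16Aux.phi1_inj Γ _ (affRack t) t hact sinv hs1 hs2,
       fun u => ⟨@Stmt16Aux.phi2 Γ _ (affRack t) t sinv hact hs1 hs2 u,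
         @Stmt16Aux.phi1_phi2 Γ _ (affRack t) t hact sinv hs1 hs2 u⟩⟩⟩
  · rw [hcm]
    exact @Stmt16Aux.part2 Γ _ (affRack t) t hact sinv hs1 hs2 hfpf
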